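/- In the three-candidate model, for a voter v ∈ P_1 and any normalized scoring rule (s_1, s_2, 0), the per-neighbor score-difference variable X′ (contribution to ŝ_v(a_3) − ŝ_v(a_2)) satisfies E[X′] = s_2·(q/(6q̂) − p/(6p̂)); in particular, under the monotone estimation error assumption p/p̂ ≥ q/q̂ and s_1 ≥ s_2, we have E[X′] ≤ 0 ≤ E[X] = (s_1 − s_2)·(p/(6p̂) − q/(6q̂)), so the expected contribution toward a_1 beating a_2 dominates that toward a_3 beating a_2. -/

import Mathlib

open MeasureTheory ProbabilityTheory

/-- Three-candidate model, voter `v ∈ P₁`, normalized scoring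
rule `(s₁, s₂, 0)`.  `X` is the per-neighbor contribution to `ŝ_v(a₁) - ŝ_v(a₂)`
(as in Statement 8) and `X'` the contribution to `ŝ_v(a₃) - ŝ_v(a₂)`, taking
value `-s₂/p̂` w.p. `p/6`; values `(s₁-s₂)/q̂, -(s₁-s₂)/q̂, s₂/q̂, s₁/q̂, -s₁/q̂`
each w.p. `q/6`; and `0` otherwise.  Then `E[X'] = s₂(q/(6q̂) - p/(6p̂))`, and
under MEE `p/p̂ ≥ q/q̂` we get `E[X'] ≤ 0 ≤ E[X] = (s₁-s₂)(p/(6p̂) - q/(6q̂))`. -/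

lemma integral_fin7_comp {Ω : Type*} [MeasurableSpace Ω] (μ : MeasureTheory.Measure Ω)
    [MeasureTheory.IsFiniteMeasure μ] (K : Ω → Fin 7) (hK : Measurable K) (c : Fin 7 → ℝ) :
    ∫ ω, c (K ω) ∂μ = ∑ i : Fin 7, c i * (μ (K ⁻¹' {i})).toReal := by
  have hfun : (fun ω => c (K ω)) =
      fun ω => ∑ i : Fin 7, Set.indicator (K ⁻¹' {i}) (fun _ => c i) ω := by
    funext ω
    rw [Finset.sum_eq_single (K ω)]
    · rw [Set.indicator_of_mem (by simp)]
    · intro i _ hi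
      refine Set.indicator_of_notMem (fun h => hi ?_) _
      have hh : K ω = i := h
      exact hh.symm
    · simp
  rw [hfun, MeasureTheory.integral_finset_sum]
  · refine Finset.sum_congr rfl fun i _ => ?_
    rw [MeasureTheory.integral_indicator_const _ (hK (measurableSet_singleton i))]
    simp [mul_comm, Measure.real]
  · intro i _
    exact (MeasureTheory.integrable_const _).indicator (hK (measurableSet_singleton i))

theorem three_candidates_P1_dominant_false_beating
    {Ω : Type*} [MeasurableSpace Ω] (μ : Measure Ω) [IsProbabilityMeasure μ]
    (p phat q qhat s1 s2 : ℝ)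
    (hp : 0 < p) (hp' : p ≤ 1) (hq : 0 < q) (hq' : q ≤ 1)
    (hphat : 0 < phat) (hphat' : phat ≤ 1) (hqhat : 0 < qhat) (hqhat' : qhat ≤ 1)
    (hs1 : s2 ≤ s1) (hs2 : 0 ≤ s2) (hsum : s1 + s2 = 1)
    (K : Ω → Fin 7) (hK : Measurable K)
    (h0 : μ (K ⁻¹' {0}) = ENNReal.ofReal (p/6))
    (h1 : μ (K ⁻¹' {1}) = ENNReal.ofReal (q/6))
    (h2 : μ (K ⁻¹' {2}) = ENNReal.ofReal (q/6))
    (h3 : μ (K ⁻¹' {3}) = ENNReal.ofReal (q/6))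
    (h4 : μ (K ⁻¹' {4}) = ENNReal.ofReal (q/6))
    (h5 : μ (K ⁻¹' {5}) = ENNReal.ofReal (q/6))
    (X : Ω → ℝ)
    (hX : X = fun ω =>
      if K ω = 0 then (s1 - s2)/phat
      else if K ω = 1 then -(s1 - s2)/qhat
      else if K ω = 2 then s1/qhat
      else if K ω = 3 then -s1/qhat
      else if K ω = 4 then s2/qhat
      else if K ω = 5 then -s2/qhat
      else 0)
    (K' : Ω → Fin 7) (hK' : Measurable K')
    (h0' : μ (K' ⁻¹' {0}) = ENNReal.ofReal (p/6))
    (h1' : μ (K' ⁻¹' {1}) = ENNReal.ofReal (q/6))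
    (h2' : μ (K' ⁻¹' {2}) = ENNReal.ofReal (q/6))
    (h3' : μ (K' ⁻¹' {3}) = ENNReal.ofReal (q/6))
    (h4' : μ (K' ⁻¹' {4}) = ENNReal.ofReal (q/6))
    (h5' : μ (K' ⁻¹' {5}) = ENNReal.ofReal (q/6))
    (X' : Ω → ℝ)
    (hX' : X' = fun ω =>
      if K' ω = 0 then -s2/phat
      else if K' ω = 1 then (s1 - s2)/qhat
      else if K' ω = 2 then -(s1 - s2)/qhat
      else if K' ω = 3 then s2/qhat
      else if K' ω = 4 then s1/qhat
      else if K' ω = 5 then -s1/qhat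
      else 0) :
    (∫ ω, X' ω ∂μ = s2 * (q/(6*qhat) - p/(6*phat))) ∧
    (∫ ω, X ω ∂μ = (s1 - s2) * (p/(6*phat) - q/(6*qhat))) ∧
    (p/phat ≥ q/qhat → (∫ ω, X' ω ∂μ) ≤ 0 ∧ 0 ≤ ∫ ω, X ω ∂μ) := by
  have hq6 : (ENNReal.ofReal (q/6)).toReal = q/6 := ENNReal.toReal_ofReal (by positivity)
  have hp6 : (ENNReal.ofReal (p/6)).toReal = p/6 := ENNReal.toReal_ofReal (by positivity)
  have hEX : ∫ ω, X ω ∂μ = (s1 - s2) * (p/(6*phat) - q/(6*qhat)) := by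
    set c : Fin 7 → ℝ := fun j =>
      if j = 0 then (s1 - s2)/phat
      else if j = 1 then -(s1 - s2)/qhat
      else if j = 2 then s1/qhat
      else if j = 3 then -s1/qhat
      else if j = 4 then s2/qhat
      else if j = 5 then -s2/qhat
      else 0 with hc
    have hXc : X = fun ω => c (K ω) := hX
    rw [hXc, integral_fin7_comp μ K hK c, Fin.sum_univ_seven]
    have e0 : c 0 = (s1 - s2)/phat := by simp [hc]
    have e1 : c 1 = -(s1 - s2)/qhat := by simp [hc]
    have e2 : c 2 = s1/qhat := by simp [hc]
    have e3 : c 3 = -s1/qhat := by simp [hc]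
    have e4 : c 4 = s2/qhat := by simp [hc]
    have e5 : c 5 = -s2/qhat := by simp [hc]
    have e6 : c 6 = 0 := by simp [hc]
    rw [e0, e1, e2, e3, e4, e5, e6, h0, h1, h2, h3, h4, h5, hq6, hp6]
    field_simp
    ring
  have hEX' : ∫ ω, X' ω ∂μ = s2 * (q/(6*qhat) - p/(6*phat)) := by
    set c : Fin 7 → ℝ := fun j =>
      if j = 0 then -s2/phat
      else if j = 1 then (s1 - s2)/qhat
      else if j = 2 then -(s1 - s2)/qhat
      else if j = 3 then s2/qhat
      else if j = 4 then s1/qhat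
      else if j = 5 then -s1/qhat
      else 0 with hc
    have hXc : X' = fun ω => c (K' ω) := hX'
    rw [hXc, integral_fin7_comp μ K' hK' c, Fin.sum_univ_seven]
    have e0 : c 0 = -s2/phat := by simp [hc]
    have e1 : c 1 = (s1 - s2)/qhat := by simp [hc]
    have e2 : c 2 = -(s1 - s2)/qhat := by simp [hc]
    have e3 : c 3 = s2/qhat := by simp [hc]
    have e4 : c 4 = s1/qhat := by simp [hc]
    have e5 : c 5 = -s1/qhat := by simp [hc]
    have e6 : c 6 = 0 := by simp [hc]
    rw [e0, e1, e2, e3, e4, e5, e6, h0', h1', h2', h3', h4', h5', hq6, hp6]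
    field_simp
    ring
  refine ⟨hEX', hEX, fun hmee => ?_⟩
  have hkey : q/(6*qhat) ≤ p/(6*phat) := by
    rw [ge_iff_le, div_le_div_iff₀ hqhat hphat] at hmee
    rw [div_le_div_iff₀ (by positivity) (by positivity)]
    nlinarith
  constructor
  · rw [hEX']
    have := sub_nonpos.mpr hkey
    exact mul_nonpos_of_nonneg_of_nonpos hs2 this
  · rw [hEX]
    exact mul_nonneg (by linarith) (by linarith)
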